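/- Let G and Ψ be Young functions such that lim_{t→0} Ψ(|t|)/G(|t|) = 0 and lim_{t→∞} Ψ(|t|)/G*(|t|) = 0, where G* is another Young function. Let (u_n) be a sequence of measurable functions on ℝ^N such that both (∫G(|u_n|)dx)_n and (∫G*(|u_n|)dx)_n are bounded, and for each τ > 0 the Lebesgue measure of {x : |u_n(x)| > τ} tends to 0 as n → ∞. Then ∫_{ℝ^N} Ψ(|u_n|) dx → 0 as n → ∞. -/

import Mathlib

open Set Filter MeasureTheory

/-- A Young function: continuous, convex, strictly increasing on `[0,∞)`,
vanishing at `0` and tending to `∞`. -/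
def IsYoung (G : ℝ → ℝ) : Prop :=
  ContinuousOn G (Set.Ici 0) ∧ ConvexOn ℝ (Set.Ici 0) G ∧
    StrictMonoOn G (Set.Ici 0) ∧ G 0 = 0 ∧
    Filter.Tendsto G Filter.atTop Filter.atTop

lemma young_nonneg {G : ℝ → ℝ} (h : IsYoung G) {t : ℝ} (ht : 0 ≤ t) : 0 ≤ G t := by
  have := h.2.2.1.monotoneOn (Set.self_mem_Ici) (Set.mem_Ici.2 ht) ht
  simpa [h.2.2.2.1] using this

lemma young_pos {G : ℝ → ℝ} (h : IsYoung G) {t : ℝ} (ht : 0 < t) : 0 < G t := by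
  have := h.2.2.1 (Set.self_mem_Ici) (Set.mem_Ici.2 ht.le) ht
  simpa [h.2.2.2.1] using this

lemma young_meas {G : ℝ → ℝ} (h : IsYoung G) {α : Type*} [MeasurableSpace α]
    {f : α → ℝ} (hf : Measurable f) : Measurable fun x => G |f x| := by
  have h1 : Continuous ((Set.Ici (0:ℝ)).restrict G) :=
    continuousOn_iff_continuous_restrict.mp h.1
  have h2 : Measurable fun x => (⟨|f x|, Set.mem_Ici.mpr (abs_nonneg _)⟩ : Set.Ici (0:ℝ)) :=
    Measurable.subtype_mk (continuous_abs.measurable.comp hf)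
  exact h1.measurable.comp h2

theorem stmt_5 {N : ℕ} (G Ψ Gs : ℝ → ℝ)
    (hGY : IsYoung G) (hΨY : IsYoung Ψ) (hGsY : IsYoung Gs)
    (hlim0 : Filter.Tendsto (fun t : ℝ => Ψ |t| / G |t|)
      (nhdsWithin 0 {(0:ℝ)}ᶜ) (nhds 0))
    (hliminf : Filter.Tendsto (fun t : ℝ => Ψ |t| / Gs |t|)
      Filter.atTop (nhds 0))
    (u : ℕ → EuclideanSpace ℝ (Fin N) → ℝ)
    (hmeas : ∀ n, Measurable (u n))
    (hbdd : ∃ C : ℝ, ∀ n,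
      (∫⁻ x, ENNReal.ofReal (G |u n x|)) ≤ ENNReal.ofReal C ∧
      (∫⁻ x, ENNReal.ofReal (Gs |u n x|)) ≤ ENNReal.ofReal C)
    (hvanish : ∀ τ > (0:ℝ),
      Filter.Tendsto (fun n => volume {x | τ < |u n x|}) Filter.atTop (nhds 0)) :
    Filter.Tendsto (fun n => ∫⁻ x, ENNReal.ofReal (Ψ |u n x|))
      Filter.atTop (nhds 0) := by
  obtain ⟨C, hC⟩ := hbdd
  set C' : ℝ := max C 0 with hC'def
  have hC'0 : 0 ≤ C' := le_max_right _ _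
  have hCbdd : ∀ n,
      (∫⁻ x, ENNReal.ofReal (G |u n x|)) ≤ ENNReal.ofReal C' ∧
      (∫⁻ x, ENNReal.ofReal (Gs |u n x|)) ≤ ENNReal.ofReal C' := by
    intro n
    refine ⟨(hC n).1.trans ?_, (hC n).2.trans ?_⟩ <;>
      exact ENNReal.ofReal_le_ofReal (le_max_left _ _)
  have key : ∀ e : ℝ, 0 < e → ∀ᶠ n in atTop,
      (∫⁻ x, ENNReal.ofReal (Ψ |u n x|)) ≤ ENNReal.ofReal e := by
    intro e he
    set η : ℝ := e / (4 * (C' + 1)) with hηdef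
    have hηpos : 0 < η := by positivity
    -- choose δ
    obtain ⟨δ, hδpos, hδ⟩ := (Metric.tendsto_nhdsWithin_nhds.mp hlim0) η hηpos
    set δ₀ : ℝ := δ / 2 with hδ₀def
    have hδ₀pos : 0 < δ₀ := by positivity
    -- choose M
    obtain ⟨M₀, hM₀⟩ := eventually_atTop.mp (hliminf.eventually (gt_mem_nhds hηpos))
    set M : ℝ := max M₀ 1 with hMdef
    have hM1 : (1:ℝ) ≤ M := le_max_right _ _
    have hΨM0 : 0 ≤ Ψ M := young_nonneg hΨY (by linarith)
    -- pointwise bound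
    have point : ∀ n x, ENNReal.ofReal (Ψ |u n x|) ≤
        ENNReal.ofReal (η * G |u n x|) + ENNReal.ofReal (η * Gs |u n x|)
          + Set.indicator {x | δ₀ < |u n x|} (fun _ => ENNReal.ofReal (Ψ M)) x := by
      intro n x
      set t := |u n x| with htdef
      have ht0 : 0 ≤ t := abs_nonneg _
      by_cases hcase : δ₀ < t
      · rw [Set.indicator_of_mem (show x ∈ {x | δ₀ < |u n x|} from hcase)]
        by_cases hM : t ≤ M
        · have hΨle : Ψ t ≤ Ψ M :=
            hΨY.2.2.1.monotoneOn (Set.mem_Ici.2 ht0) (Set.mem_Ici.2 (by linarith)) hM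
          exact le_add_left (ENNReal.ofReal_le_ofReal hΨle)
        · push_neg at hM
          have hge : M₀ ≤ t := le_trans (le_max_left _ _) hM.le
          have hdiv := hM₀ t hge
          rw [abs_of_nonneg ht0] at hdiv
          have hGs : 0 < Gs t := young_pos hGsY (by linarith)
          have : Ψ t ≤ η * Gs t := ((div_lt_iff₀ hGs).mp hdiv).le
          calc ENNReal.ofReal (Ψ t) ≤ ENNReal.ofReal (η * Gs t) :=
                ENNReal.ofReal_le_ofReal this
            _ ≤ _ := le_add_right (le_add_left le_rfl)
      · push_neg at hcase
        rcases eq_or_lt_of_le ht0 with h0 | h0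
        · have : Ψ t = 0 := by rw [← h0]; exact hΨY.2.2.2.1
          simp [this]
        · have htne : t ∈ ({(0:ℝ)}ᶜ : Set ℝ) := by
            simp only [Set.mem_compl_iff, Set.mem_singleton_iff]
            exact ne_of_gt h0
          have hdist : dist t 0 < δ := by
            rw [Real.dist_eq, sub_zero, abs_of_nonneg ht0]
            linarith
          have := hδ htne hdist
          rw [Real.dist_eq, sub_zero, abs_of_nonneg ht0] at this
          have hlt : Ψ t / G t < η := lt_of_abs_lt this
          have hG : 0 < G t := young_pos hGY h0
          have : Ψ t ≤ η * G t := ((div_lt_iff₀ hG).mp hlt).le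
          calc ENNReal.ofReal (Ψ t) ≤ ENNReal.ofReal (η * G t) :=
                ENNReal.ofReal_le_ofReal this
            _ ≤ _ := le_add_right (le_add_right le_rfl)
    -- integral bound
    have bound : ∀ n, (∫⁻ x, ENNReal.ofReal (Ψ |u n x|)) ≤
        ENNReal.ofReal (e/4) + ENNReal.ofReal (e/4)
          + ENNReal.ofReal (Ψ M) * volume {x | δ₀ < |u n x|} := by
      intro n
      have hms : MeasurableSet {x | δ₀ < |u n x|} :=
        measurableSet_lt measurable_const ((continuous_abs.measurable).comp (hmeas n))
      have hf1 : Measurable fun x => ENNReal.ofReal (η * G |u n x|) :=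
        ENNReal.measurable_ofReal.comp ((young_meas hGY (hmeas n)).const_mul η)
      have hf2 : Measurable fun x => ENNReal.ofReal (η * Gs |u n x|) :=
        ENNReal.measurable_ofReal.comp ((young_meas hGsY (hmeas n)).const_mul η)
      have hηC : η * C' ≤ e / 4 := by
        have h1 : η * C' ≤ η * (C' + 1) := by nlinarith
        have h2 : η * (C' + 1) = e / 4 := by
          rw [hηdef]; field_simp
        linarith
      have hbd1 : (∫⁻ x, ENNReal.ofReal (η * G |u n x|)) ≤ ENNReal.ofReal (e/4) := by
        calc (∫⁻ x, ENNReal.ofReal (η * G |u n x|))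
            = ENNReal.ofReal η * ∫⁻ x, ENNReal.ofReal (G |u n x|) := by
              simp_rw [ENNReal.ofReal_mul hηpos.le]
              exact lintegral_const_mul' _ _ ENNReal.ofReal_ne_top
          _ ≤ ENNReal.ofReal η * ENNReal.ofReal C' := mul_le_mul_right (hCbdd n).1 _
          _ = ENNReal.ofReal (η * C') := (ENNReal.ofReal_mul hηpos.le).symm
          _ ≤ ENNReal.ofReal (e/4) := ENNReal.ofReal_le_ofReal hηC
      have hbd2 : (∫⁻ x, ENNReal.ofReal (η * Gs |u n x|)) ≤ ENNReal.ofReal (e/4) := by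
        calc (∫⁻ x, ENNReal.ofReal (η * Gs |u n x|))
            = ENNReal.ofReal η * ∫⁻ x, ENNReal.ofReal (Gs |u n x|) := by
              simp_rw [ENNReal.ofReal_mul hηpos.le]
              exact lintegral_const_mul' _ _ ENNReal.ofReal_ne_top
          _ ≤ ENNReal.ofReal η * ENNReal.ofReal C' := mul_le_mul_right (hCbdd n).2 _
          _ = ENNReal.ofReal (η * C') := (ENNReal.ofReal_mul hηpos.le).symm
          _ ≤ ENNReal.ofReal (e/4) := ENNReal.ofReal_le_ofReal hηC
      calc (∫⁻ x, ENNReal.ofReal (Ψ |u n x|))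
          ≤ ∫⁻ x, (ENNReal.ofReal (η * G |u n x|) + ENNReal.ofReal (η * Gs |u n x|)
              + Set.indicator {x | δ₀ < |u n x|} (fun _ => ENNReal.ofReal (Ψ M)) x) :=
            lintegral_mono (point n)
        _ = (∫⁻ x, ENNReal.ofReal (η * G |u n x|))
            + (∫⁻ x, ENNReal.ofReal (η * Gs |u n x|))
            + ∫⁻ x, Set.indicator {x | δ₀ < |u n x|}
                (fun _ => ENNReal.ofReal (Ψ M)) x := by
            rw [lintegral_add_left (f := fun x => ENNReal.ofReal (η * G |u n x|) + ENNReal.ofReal (η * Gs |u n x|)) (hf1.add hf2), lintegral_add_left hf1]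
        _ = (∫⁻ x, ENNReal.ofReal (η * G |u n x|))
            + (∫⁻ x, ENNReal.ofReal (η * Gs |u n x|))
            + ENNReal.ofReal (Ψ M) * volume {x | δ₀ < |u n x|} := by
            rw [lintegral_indicator_const hms]
        _ ≤ _ := add_le_add (add_le_add hbd1 hbd2) le_rfl
    -- the vanishing term
    have hvterm : Tendsto (fun n => ENNReal.ofReal (Ψ M) * volume {x | δ₀ < |u n x|})
        atTop (nhds 0) := by
      have h := ENNReal.Tendsto.const_mul (a := ENNReal.ofReal (Ψ M))
        (hvanish δ₀ hδ₀pos) (Or.inr ENNReal.ofReal_ne_top)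
      simpa using h
    have hev := (ENNReal.tendsto_nhds_zero.mp hvterm) (ENNReal.ofReal (e/2))
      (by simp [ENNReal.ofReal_pos]; linarith)
    filter_upwards [hev] with n hn
    calc (∫⁻ x, ENNReal.ofReal (Ψ |u n x|))
        ≤ ENNReal.ofReal (e/4) + ENNReal.ofReal (e/4)
          + ENNReal.ofReal (Ψ M) * volume {x | δ₀ < |u n x|} := bound n
      _ ≤ ENNReal.ofReal (e/4) + ENNReal.ofReal (e/4) + ENNReal.ofReal (e/2) :=
          add_le_add le_rfl hn
      _ = ENNReal.ofReal e := by
          rw [← ENNReal.ofReal_add (by linarith) (by linarith),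
            ← ENNReal.ofReal_add (by linarith) (by linarith)]
          congr 1; ring
  rw [ENNReal.tendsto_nhds_zero]
  intro ε hε
  set ε' : ENNReal := min ε 1 with hε'def
  have hε'ne0 : ε' ≠ 0 := (lt_min hε zero_lt_one).ne'
  have hε'netop : ε' ≠ ⊤ := by
    simp [hε'def]
  have he : 0 < ε'.toReal := ENNReal.toReal_pos hε'ne0 hε'netop
  filter_upwards [key ε'.toReal he] with n hn
  calc (∫⁻ x, ENNReal.ofReal (Ψ |u n x|)) ≤ ENNReal.ofReal ε'.toReal := hn
    _ = ε' := ENNReal.ofReal_toReal hε'netop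
    _ ≤ ε := min_le_left _ _
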